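/- arXiv:2504.08592 — 2 statements merged into one kernel-verified Lean document; each statement's English description precedes it below -/
import Mathlib

section
/- Let u(z₁,z₂,z₃) = √(−log|z₁|)·(|z₂|² − 1) on the ball B(0,1/4) ⊂ ℂ³ (for z₁ ≠ 0). Then for z₁ ≠ 0 the Wirtinger derivatives of u satisfy ∂²u/∂z₁∂z̄₁ · ∂²u/∂z₂∂z̄₂ − ∂²u/∂z₁∂z̄₂ · ∂²u/∂z₂∂z̄₁ = (1/(8|z₁|²(−log|z₁|)))·(1/2 − |z₂|²), and consequently this expression is nonnegative at every point of B(0,1/4) with z₁ ≠ 0. -/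
open Complex

noncomputable section

/-- The Wirtinger derivative `∂f/∂z = (∂f/∂x − i ∂f/∂y)/2` of `f : ℂ → ℂ`. -/
def wirtD (f : ℂ → ℂ) (z : ℂ) : ℂ :=
  (1 / 2) * (fderiv ℝ f z 1 - Complex.I * fderiv ℝ f z Complex.I)

/-- The conjugate Wirtinger derivative `∂f/∂z̄ = (∂f/∂x + i ∂f/∂y)/2` of `f : ℂ → ℂ`. -/
def wirtDbar (f : ℂ → ℂ) (z : ℂ) : ℂ :=
  (1 / 2) * (fderiv ℝ f z 1 + Complex.I * fderiv ℝ f z Complex.I)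

/-- The function `u(z₁,z₂) = √(−log|z₁|)·(|z₂|² − 1)` (independent of `z₃`),
viewed as a complex-valued (in fact real-valued) function. -/
def uFun (z₁ z₂ : ℂ) : ℂ :=
  ((Real.sqrt (-Real.log (‖z₁‖)) * (‖z₂‖ ^ 2 - 1) : ℝ) : ℂ)

/-! ### Auxiliary machinery -/

/-- `s(t) = √(−(log t)/2)`, so that `s(|z|²) = √(−log |z|)`. -/
def sFn (t : ℝ) : ℝ := Real.sqrt (-Real.log t / 2)

lemma sFn_hasDerivAt {t : ℝ} (h0 : 0 < t) (h1 : t < 1) :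
    HasDerivAt sFn (-1/(4*t*sFn t)) t := by
  have hlog : Real.log t < 0 := Real.log_neg h0 h1
  have hpos : 0 < -Real.log t / 2 := by linarith
  have hg : HasDerivAt (fun u : ℝ => -Real.log u / 2) (-(t⁻¹)/2) t :=
    ((Real.hasDerivAt_log h0.ne').neg).div_const 2
  have hs := (Real.hasDerivAt_sqrt hpos.ne').comp t hg
  have hsne : sFn t ≠ 0 := by unfold sFn; positivity
  refine hs.congr_deriv ?_
  unfold sFn at hsne ⊢
  field_simp
  ring

lemma sFn_pos {t : ℝ} (h0 : 0 < t) (h1 : t < 1) : 0 < sFn t := by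
  have hlog : Real.log t < 0 := Real.log_neg h0 h1
  unfold sFn
  have : 0 < -Real.log t / 2 := by linarith
  positivity

lemma uFun_eq (a b : ℂ) :
    uFun a b = ((sFn (Complex.normSq a) * (Complex.normSq b - 1) : ℝ) : ℂ) := by
  unfold uFun sFn
  rw [Complex.sq_norm, Complex.norm_def, Real.log_sqrt (Complex.normSq_nonneg a)]
  norm_num [neg_div]

lemma hasFDerivAt_normSq' (z : ℂ) :
    HasFDerivAt Complex.normSq
      ((2*z.re) • Complex.reCLM + (2*z.im) • Complex.imCLM) z := by
  have hre : HasFDerivAt Complex.re Complex.reCLM z := Complex.reCLM.hasFDerivAt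
  have him : HasFDerivAt Complex.im Complex.imCLM z := Complex.imCLM.hasFDerivAt
  have h1 := (hre.mul hre).add (him.mul him)
  have h2 : Complex.normSq = fun w : ℂ => w.re * w.re + w.im * w.im := by
    funext w; simp [Complex.normSq_apply]
  rw [h2]
  refine h1.congr_fderiv ?_
  ext v <;> simp <;> ring

lemma hasFDerivAt_ofReal_normSq (φ : ℝ → ℝ) (φ' : ℝ) (z : ℂ)
    (h : HasDerivAt φ φ' (Complex.normSq z)) :
    HasFDerivAt (fun w => ((φ (Complex.normSq w) : ℝ) : ℂ))
      (Complex.ofRealCLM.comp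
        (φ' • ((2*z.re) • Complex.reCLM + (2*z.im) • Complex.imCLM))) z :=
  Complex.ofRealCLM.hasFDerivAt.comp z
    (h.comp_hasFDerivAt z (hasFDerivAt_normSq' z))

lemma wirtD_ofReal_normSq (φ : ℝ → ℝ) (φ' : ℝ) (z : ℂ)
    (h : HasDerivAt φ φ' (Complex.normSq z)) :
    wirtD (fun w => ((φ (Complex.normSq w) : ℝ) : ℂ)) z
      = (φ' : ℂ) * (starRingEnd ℂ) z := by
  unfold wirtD
  rw [(hasFDerivAt_ofReal_normSq φ φ' z h).fderiv]
  apply Complex.ext <;> simp <;> ring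

lemma wirtDbar_ofReal_normSq (φ : ℝ → ℝ) (φ' : ℝ) (z : ℂ)
    (h : HasDerivAt φ φ' (Complex.normSq z)) :
    wirtDbar (fun w => ((φ (Complex.normSq w) : ℝ) : ℂ)) z = (φ' : ℂ) * z := by
  unfold wirtDbar
  rw [(hasFDerivAt_ofReal_normSq φ φ' z h).fderiv]
  apply Complex.ext <;> simp <;> ring

lemma wirtD_id_mul_ofReal_normSq (ψ : ℝ → ℝ) (ψ' : ℝ) (z : ℂ)
    (h : HasDerivAt ψ ψ' (Complex.normSq z)) :
    wirtD (fun w => w * ((ψ (Complex.normSq w) : ℝ) : ℂ)) z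
      = ((ψ (Complex.normSq z) + Complex.normSq z * ψ' : ℝ) : ℂ) := by
  have hid : HasFDerivAt (fun w : ℂ => w) (ContinuousLinearMap.id ℝ ℂ) z :=
    hasFDerivAt_id z
  have hF := hid.mul (hasFDerivAt_ofReal_normSq ψ ψ' z h)
  unfold wirtD
  rw [show (fun w : ℂ => w * ((ψ (Complex.normSq w) : ℝ) : ℂ))
      = ((fun w : ℂ => w) * fun w => ((ψ (Complex.normSq w) : ℝ) : ℂ)) from rfl, hF.fderiv]
  apply Complex.ext <;> simp [Complex.normSq_apply] <;> ring

lemma wirtD_const_mul_id (C : ℂ) (z : ℂ) :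
    wirtD (fun w => C * w) z = C := by
  have hF : HasFDerivAt (fun w : ℂ => C * w)
      (C • ContinuousLinearMap.id ℝ ℂ) z := (hasFDerivAt_id z).const_mul C
  unfold wirtD
  rw [hF.fderiv]
  apply Complex.ext <;> simp <;> ring

lemma wirtD_mul_const (f : ℂ → ℂ) (C : ℂ) (z : ℂ) (hf : DifferentiableAt ℝ f z) :
    wirtD (fun w => f w * C) z = wirtD f z * C := by
  unfold wirtD
  rw [fderiv_mul_const hf]
  simp
  ring

lemma wirtD_congr {f g : ℂ → ℂ} {z : ℂ} (h : f =ᶠ[nhds z] g) :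
    wirtD f z = wirtD g z := by
  unfold wirtD; rw [h.fderiv_eq]

/-- Inner derivative in the second variable: `∂/∂z̄ [c(|w|²−1)] = c w`. -/
lemma inner2 (c : ℝ) (w : ℂ) :
    wirtDbar (fun b' => ((c * (Complex.normSq b' - 1) : ℝ) : ℂ)) w = (c : ℂ) * w := by
  simpa using wirtDbar_ofReal_normSq (fun t => c * (t - 1)) c w
    (by simpa using ((hasDerivAt_id (Complex.normSq w)).sub_const 1).const_mul c)

/-- Inner derivative in the first variable: `∂/∂z̄ [s(|w|²) g] = (s'(|z|²) g) z`. -/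
lemma inner1 (g : ℝ) (z : ℂ) (h0 : 0 < Complex.normSq z) (h1 : Complex.normSq z < 1) :
    wirtDbar (fun a' => ((sFn (Complex.normSq a') * g : ℝ) : ℂ)) z
      = ((-1/(4*Complex.normSq z*sFn (Complex.normSq z)) * g : ℝ) : ℂ) * z := by
  simpa using wirtDbar_ofReal_normSq (fun t => sFn t * g)
    (-1/(4*Complex.normSq z*sFn (Complex.normSq z)) * g) z
    ((sFn_hasDerivAt h0 h1).mul_const g)

/-- The term `∂²/∂z∂z̄ [s(|z|²) g] = −g/(16 |z|² s(|z|²)³)`. -/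
lemma T1_lemma (z : ℂ) (g : ℝ) (h0 : 0 < Complex.normSq z) (h1 : Complex.normSq z < 1) :
    wirtD (fun a => wirtDbar (fun a' => ((sFn (Complex.normSq a') * g : ℝ) : ℂ)) a) z
      = ((-g / (16 * Complex.normSq z * sFn (Complex.normSq z)^3) : ℝ) : ℂ) := by
  have hev : ∀ᶠ a in nhds z, Complex.normSq a ∈ Set.Ioo (0:ℝ) 1 :=
    Complex.continuous_normSq.continuousAt.preimage_mem_nhds (Ioo_mem_nhds h0 h1)
  have e1 : (fun a => wirtDbar (fun a' => ((sFn (Complex.normSq a') * g : ℝ) : ℂ)) a)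
      =ᶠ[nhds z] (fun a => a * (((-g * ((4*Complex.normSq a) * sFn (Complex.normSq a))⁻¹ : ℝ)) : ℂ)) := by
    filter_upwards [hev] with a ha
    rw [inner1 g a ha.1 ha.2]
    push_cast
    ring
  rw [wirtD_congr e1]
  have hs := sFn_hasDerivAt h0 h1
  have hspos := sFn_pos h0 h1
  have hu : HasDerivAt (fun t => (4*t) * sFn t)
      ((4*1) * sFn (Complex.normSq z) + (4*Complex.normSq z) * (-1/(4*Complex.normSq z*sFn (Complex.normSq z))))
      (Complex.normSq z) := ((hasDerivAt_id _).const_mul 4).mul hs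
  have hune : (4*Complex.normSq z) * sFn (Complex.normSq z) ≠ 0 := by positivity
  have hinv := hu.inv hune
  have hψ := hinv.const_mul (-g)
  have hψ' : HasDerivAt (fun t => -g * ((4*t) * sFn t)⁻¹) _ (Complex.normSq z) := hψ
  rw [wirtD_id_mul_ofReal_normSq _ _ z hψ']
  norm_cast
  have hn := h0.ne'
  have hsne := hspos.ne'
  field_simp
  push_cast [Int.cast_negSucc]
  ring

/-- `∂²/∂z₁∂z̄₂`-type term. -/
lemma T3_lemma (z w : ℂ) (h0 : 0 < Complex.normSq z) (h1 : Complex.normSq z < 1) :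
    wirtD (fun a => ((sFn (Complex.normSq a) : ℝ) : ℂ) * w) z
      = ((-1/(4 * Complex.normSq z * sFn (Complex.normSq z)) : ℝ) : ℂ)
          * (starRingEnd ℂ) z * w := by
  have hdiff : DifferentiableAt ℝ (fun a => ((sFn (Complex.normSq a) : ℝ) : ℂ)) z :=
    (hasFDerivAt_ofReal_normSq sFn _ z (sFn_hasDerivAt h0 h1)).differentiableAt
  rw [wirtD_mul_const _ _ _ hdiff,
    wirtD_ofReal_normSq sFn (-1/(4*Complex.normSq z*sFn (Complex.normSq z))) z
      (sFn_hasDerivAt h0 h1)]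

lemma wirtD_ofReal_normSq_sub_one (C : ℂ) (w : ℂ) :
    wirtD (fun b => ((Complex.normSq b - 1 : ℝ) : ℂ) * C) w
      = (starRingEnd ℂ) w * C := by
  have hdiff : DifferentiableAt ℝ (fun b : ℂ => ((Complex.normSq b - 1 : ℝ) : ℂ)) w :=
    (hasFDerivAt_ofReal_normSq (fun t => t - 1) 1 w
      ((hasDerivAt_id _).sub_const 1)).differentiableAt
  rw [wirtD_mul_const _ _ _ hdiff]
  have h := wirtD_ofReal_normSq (fun t => t - 1) 1 w ((hasDerivAt_id _).sub_const 1)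
  simp only [Complex.ofReal_one, one_mul] at h
  rw [show (fun b : ℂ => ((Complex.normSq b - 1 : ℝ) : ℂ))
      = (fun b : ℂ => (((fun t : ℝ => t - 1) (Complex.normSq b) : ℝ) : ℂ)) from rfl, h]

/-- On the ball `B(0,1/4) ⊂ ℂ³` and for `z₁ ≠ 0`, the Wirtinger
derivatives of `u(z) = √(−log|z₁|)(|z₂|²−1)` satisfy
`∂²u/∂z₁∂z̄₁ · ∂²u/∂z₂∂z̄₂ − ∂²u/∂z₁∂z̄₂ · ∂²u/∂z₂∂z̄₁
  = (1/(8|z₁|²(−log|z₁|)))·(1/2 − |z₂|²)`,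
and this expression is nonnegative there. -/
theorem hessian_determinant_of_uFun (z₁ z₂ z₃ : ℂ)
    (hball : ‖z₁‖ ^ 2 + ‖z₂‖ ^ 2 + ‖z₃‖ ^ 2 < 1 / 16)
    (hz₁ : z₁ ≠ 0) :
    wirtD (fun a => wirtDbar (fun a' => uFun a' z₂) a) z₁
        * wirtD (fun b => wirtDbar (fun b' => uFun z₁ b') b) z₂
      - wirtD (fun a => wirtDbar (fun b' => uFun a b') z₂) z₁
        * wirtD (fun b => wirtDbar (fun a' => uFun a' b) z₁) z₂
      = ((1 / (8 * ‖z₁‖ ^ 2 * (-Real.log (‖z₁‖)))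
            * (1 / 2 - ‖z₂‖ ^ 2) : ℝ) : ℂ)
    ∧ 0 ≤ (1 / (8 * ‖z₁‖ ^ 2 * (-Real.log (‖z₁‖)))
            * (1 / 2 - ‖z₂‖ ^ 2) : ℝ) := by
  have ha1 : ‖z₁‖ ^ 2 = Complex.normSq z₁ := Complex.sq_norm z₁
  have ha2 : ‖z₂‖ ^ 2 = Complex.normSq z₂ := Complex.sq_norm z₂
  have hn1pos : 0 < Complex.normSq z₁ := Complex.normSq_pos.mpr hz₁
  have hn1lt : Complex.normSq z₁ < 1/16 := by
    nlinarith [Complex.normSq_nonneg z₂, sq_nonneg (‖z₃‖)]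
  have hn2lt : Complex.normSq z₂ < 1/16 := by
    nlinarith [Complex.normSq_nonneg z₁, sq_nonneg (‖z₃‖)]
  have hn2nonneg : 0 ≤ Complex.normSq z₂ := Complex.normSq_nonneg z₂
  have hn1lt1 : Complex.normSq z₁ < 1 := by linarith
  have hlogneg : Real.log (Complex.normSq z₁) < 0 := Real.log_neg hn1pos hn1lt1
  have hspos : 0 < sFn (Complex.normSq z₁) := sFn_pos hn1pos hn1lt1
  have hs2 : sFn (Complex.normSq z₁) ^ 2 = -Real.log (Complex.normSq z₁) / 2 :=
    Real.sq_sqrt (by linarith)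
  -- T1
  have hT1 : wirtD (fun a => wirtDbar (fun a' => uFun a' z₂) a) z₁
      = ((-(Complex.normSq z₂ - 1)
          / (16 * Complex.normSq z₁ * sFn (Complex.normSq z₁)^3) : ℝ) : ℂ) := by
    have e : (fun a => wirtDbar (fun a' => uFun a' z₂) a)
        = (fun a => wirtDbar
            (fun a' => ((sFn (Complex.normSq a') * (Complex.normSq z₂ - 1) : ℝ) : ℂ)) a) := by
      funext a; congr 1; funext a'; exact uFun_eq a' z₂
    rw [e]
    exact T1_lemma z₁ _ hn1pos hn1lt1
  -- T2
  have hT2 : wirtD (fun b => wirtDbar (fun b' => uFun z₁ b') b) z₂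
      = ((sFn (Complex.normSq z₁) : ℝ) : ℂ) := by
    have e : (fun b => wirtDbar (fun b' => uFun z₁ b') b)
        = (fun b => ((sFn (Complex.normSq z₁) : ℝ) : ℂ) * b) := by
      funext b
      have e2 : (fun b' => uFun z₁ b')
          = (fun b' => ((sFn (Complex.normSq z₁) * (Complex.normSq b' - 1) : ℝ) : ℂ)) := by
        funext b'; exact uFun_eq z₁ b'
      rw [e2, inner2]
    rw [e, wirtD_const_mul_id]
  -- T3
  have hT3 : wirtD (fun a => wirtDbar (fun b' => uFun a b') z₂) z₁
      = ((-1/(4 * Complex.normSq z₁ * sFn (Complex.normSq z₁)) : ℝ) : ℂ)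
          * (starRingEnd ℂ) z₁ * z₂ := by
    have e : (fun a => wirtDbar (fun b' => uFun a b') z₂)
        = (fun a => ((sFn (Complex.normSq a) : ℝ) : ℂ) * z₂) := by
      funext a
      have e2 : (fun b' => uFun a b')
          = (fun b' => ((sFn (Complex.normSq a) * (Complex.normSq b' - 1) : ℝ) : ℂ)) := by
        funext b'; exact uFun_eq a b'
      rw [e2, inner2]
    rw [e]
    exact T3_lemma z₁ z₂ hn1pos hn1lt1
  -- T4
  have hT4 : wirtD (fun b => wirtDbar (fun a' => uFun a' b) z₁) z₂
      = (starRingEnd ℂ) z₂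
          * (((-1/(4 * Complex.normSq z₁ * sFn (Complex.normSq z₁)) : ℝ) : ℂ) * z₁) := by
    have e : (fun b => wirtDbar (fun a' => uFun a' b) z₁)
        = (fun b => ((Complex.normSq b - 1 : ℝ) : ℂ)
            * (((-1/(4 * Complex.normSq z₁ * sFn (Complex.normSq z₁)) : ℝ) : ℂ) * z₁)) := by
      funext b
      have e2 : (fun a' => uFun a' b)
          = (fun a' => ((sFn (Complex.normSq a') * (Complex.normSq b - 1) : ℝ) : ℂ)) := by
        funext a'; exact uFun_eq a' b
      rw [e2, inner1 _ z₁ hn1pos hn1lt1]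
      push_cast
      ring
    rw [e, wirtD_ofReal_normSq_sub_one]
  rw [hT1, hT2, hT3, hT4]
  have hlogabs : Real.log (‖z₁‖) = Real.log (Complex.normSq z₁) / 2 := by
    rw [Complex.norm_def, Real.log_sqrt (Complex.normSq_nonneg z₁)]
  constructor
  · have hmc : (((-1/(4 * Complex.normSq z₁ * sFn (Complex.normSq z₁)) : ℝ) : ℂ)
          * (starRingEnd ℂ) z₁ * z₂)
        * ((starRingEnd ℂ) z₂
          * (((-1/(4 * Complex.normSq z₁ * sFn (Complex.normSq z₁)) : ℝ) : ℂ) * z₁))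
        = (((-1/(4 * Complex.normSq z₁ * sFn (Complex.normSq z₁)))^2
            * Complex.normSq z₁ * Complex.normSq z₂ : ℝ) : ℂ) := by
      have h1 : z₁ * (starRingEnd ℂ) z₁ = ((Complex.normSq z₁ : ℝ) : ℂ) := Complex.mul_conj z₁
      have h2 : z₂ * (starRingEnd ℂ) z₂ = ((Complex.normSq z₂ : ℝ) : ℂ) := Complex.mul_conj z₂
      calc _ = (((-1/(4 * Complex.normSq z₁ * sFn (Complex.normSq z₁)) : ℝ) : ℂ)
              * ((-1/(4 * Complex.normSq z₁ * sFn (Complex.normSq z₁)) : ℝ) : ℂ))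
              * (z₁ * (starRingEnd ℂ) z₁) * (z₂ * (starRingEnd ℂ) z₂) := by ring
        _ = _ := by rw [h1, h2]; push_cast; ring
    rw [hmc, ha1, ha2, hlogabs]
    norm_cast
    have hlogval : Real.log (Complex.normSq z₁) = -2 * sFn (Complex.normSq z₁)^2 := by
      linarith [hs2]
    rw [hlogval]
    have hn := hn1pos.ne'
    have hsne := hspos.ne'
    field_simp
    push_cast [Int.cast_negSucc]
    ring
  · have habspos : 0 < ‖z₁‖ := norm_pos_iff.mpr hz₁
    have habslt1 : ‖z₁‖ < 1 := by nlinarith [norm_nonneg z₁]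
    have hlneg : Real.log (‖z₁‖) < 0 := Real.log_neg habspos habslt1
    apply mul_nonneg
    · apply div_nonneg zero_le_one
      have : (0:ℝ) ≤ ‖z₁‖ ^ 2 := sq_nonneg _
      nlinarith
    · rw [ha2]; linarith
end
end

section
/- For every ε with 0 < ε < 1/8, the integral over the closed ball K = {z ∈ ℂ³ : |z| ≤ ε} of the function z ↦ (4/((−log|z₁|)·|z₁|²))·(1/2 − |z₂|²) with respect to Lebesgue measure on ℂ³ ≅ ℝ⁶ is infinite: ∫_K 4(1/2 − |z₂|²)/(|z₁|²(−log|z₁|)) dV = +∞. (Consequently the density of (dd^c u)² ∧ (i/2)dz₃∧dz̄₃ for u = √(−log|z₁|)(|z₂|²−1) is not locally integrable near {z₁ = 0}, so this wedge product is not a Radon measure on B(0,1/4).) -/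
open MeasureTheory

noncomputable section

open Set ENNReal


lemma harmonic_ennreal_top : ∑' n : ℕ, ENNReal.ofReal ((1:ℝ)/(n+1)) = ⊤ := by
  by_contra h
  have hs := ENNReal.summable_toReal h
  have h2 : Summable (fun n : ℕ => (1 : ℝ)/((n:ℝ)+1)) := by
    refine hs.congr fun n => ?_
    rw [ENNReal.toReal_ofReal (by positivity)]
  have h3 : Summable (fun n : ℕ => (1:ℝ)/n) := by
    rw [← _root_.summable_nat_add_iff 1]
    exact h2.congr fun n => by push_cast; ring
  exact Real.not_summable_one_div_natCast h3

lemma meas_g : Measurable (fun z : ℂ =>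
    ENNReal.ofReal (1 / (‖z‖ ^ 2 * (-Real.log (‖z‖))))) := by
  apply ENNReal.measurable_ofReal.comp
  apply Measurable.div measurable_const
  apply Measurable.mul
  · exact continuous_norm.measurable.pow_const 2
  · exact (Real.measurable_log.comp continuous_norm.measurable).neg

lemma core_div (δ : ℝ) (hδ0 : 0 < δ) (hδ : δ ≤ 1/8) :
    ∫⁻ z in Metric.closedBall (0:ℂ) δ,
      ENNReal.ofReal (1 / (‖z‖ ^ 2 * (-Real.log (‖z‖)))) = ⊤ := by
  set f : ℂ → ℝ≥0∞ := fun z =>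
    ENNReal.ofReal (1 / (‖z‖ ^ 2 * (-Real.log (‖z‖)))) with hf
  have hfm : Measurable f := meas_g
  set r : ℕ → ℝ := fun n => δ / 2 ^ n with hr
  have hrpos : ∀ n, 0 < r n := fun n => by positivity
  have hranti : ∀ m n, m ≤ n → r n ≤ r m := by
    intro m n hmn
    apply div_le_div_of_nonneg_left hδ0.le (by positivity)
    exact pow_le_pow_right₀ one_le_two hmn
  have hrle : ∀ n, r n ≤ δ := by
    intro n
    have := hranti 0 n (Nat.zero_le n)
    simp only [hr, pow_zero, div_one] at this
    exact this
  have hrlt1 : ∀ n, r n < 1 := fun n => lt_of_le_of_lt (hrle n) (by linarith)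
  set C : ℝ := Real.log 2 - Real.log δ with hC
  have hlogδ : Real.log δ < 0 := Real.log_neg hδ0 (by linarith)
  have hC0 : 0 < C := by
    have := Real.log_pos (by norm_num : (1:ℝ) < 2)
    linarith
  set L : ℕ → ℝ := fun n => -Real.log (r (n+1)) with hL
  have hLval : ∀ n, L n = (n+1) * Real.log 2 - Real.log δ := by
    intro n
    simp only [hL, hr]
    rw [Real.log_div (ne_of_gt hδ0) (by positivity), Real.log_pow]
    push_cast; ring
  have hL0 : ∀ n, 0 < L n := by
    intro n
    rw [hLval]
    have h2 := Real.log_pos (by norm_num : (1:ℝ) < 2)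
    have : (0:ℝ) ≤ n := Nat.cast_nonneg n
    nlinarith
  have hLC : ∀ n, L n ≤ (n+1) * C := by
    intro n
    rw [hLval, hC]
    have : (0:ℝ) ≤ n := Nat.cast_nonneg n
    nlinarith
  set A : ℕ → Set ℂ := fun n =>
    Metric.closedBall 0 (r n) \ Metric.closedBall 0 (r (n+1)) with hA
  have hAm : ∀ n, MeasurableSet (A n) :=
    fun n => measurableSet_closedBall.diff measurableSet_closedBall
  have hAd : Pairwise (Function.onFun Disjoint A) := by
    have key : ∀ m n, m < n → Disjoint (A m) (A n) := by
      intro m n hmn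
      rw [Set.disjoint_left]
      intro x hxm hxn
      exact hxm.2 (Metric.closedBall_subset_closedBall (hranti (m+1) n hmn) hxn.1)
    intro m n hmn
    rcases hmn.lt_or_gt with h | h
    · exact key m n h
    · exact (key n m h).symm
  have hAsub : (⋃ n, A n) ⊆ Metric.closedBall (0:ℂ) δ := by
    refine Set.iUnion_subset fun n => ?_
    exact Set.diff_subset.trans (Metric.closedBall_subset_closedBall (hrle n))
  -- per-annulus bound
  have key : ∀ n : ℕ, ENNReal.ofReal ((3*Real.pi/4) / ((n+1) * C)) ≤ ∫⁻ z in A n, f z := by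
    intro n
    have hpt : ∀ x ∈ A n, ENNReal.ofReal (1/(r n ^ 2 * L n)) ≤ f x := by
      intro x hx
      have hx1 : ‖x‖ ≤ r n := by
        have := hx.1
        simpa [Complex.dist_eq] using this
      have hx2 : r (n+1) < ‖x‖ := by
        have := hx.2
        simp only [Metric.mem_closedBall, Complex.dist_eq, sub_zero, not_le] at this
        exact this
      have hax : 0 < ‖x‖ := lt_trans (hrpos (n+1)) hx2
      have hlogx : 0 < -Real.log (‖x‖) := by
        have := Real.log_neg hax (lt_of_le_of_lt hx1 (hrlt1 n))
        linarith
      apply ENNReal.ofReal_le_ofReal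
      apply one_div_le_one_div_of_le (by positivity)
      apply mul_le_mul
      · exact pow_le_pow_left₀ hax.le hx1 2
      · have := Real.log_le_log (hrpos (n+1)) hx2.le
        simp only [hL]; linarith
      · exact hlogx.le
      · positivity
    have hvol : ENNReal.ofReal (3/4 * Real.pi * r n ^ 2) ≤ volume (A n) := by
      have h1 : volume (Metric.closedBall (0:ℂ) (r n))
          - volume (Metric.closedBall (0:ℂ) (r (n+1))) ≤ volume (A n) :=
        le_measure_diff
      refine le_trans ?_ h1
      rw [Complex.volume_closedBall, Complex.volume_closedBall]
      have hpi : (NNReal.pi : ℝ≥0∞) = ENNReal.ofReal Real.pi := by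
        rw [← NNReal.coe_real_pi, ENNReal.ofReal_coe_nnreal]
      rw [hpi, ← ENNReal.ofReal_pow (hrpos n).le, ← ENNReal.ofReal_pow (hrpos (n+1)).le,
        ← ENNReal.ofReal_mul (by positivity), ← ENNReal.ofReal_mul (by positivity),
        ← ENNReal.ofReal_sub _ (by positivity)]
      apply ENNReal.ofReal_le_ofReal
      have hrs : r (n+1) = r n / 2 := by
        simp only [hr, pow_succ]; ring
      rw [hrs]; ring_nf; nlinarith [Real.pi_pos, sq_nonneg (r n)]
    calc ENNReal.ofReal ((3*Real.pi/4) / ((n+1) * C))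
        ≤ ENNReal.ofReal (1/(r n ^ 2 * L n)) * ENNReal.ofReal (3/4 * Real.pi * r n ^ 2) := by
          have hrn := hrpos n
          have hLn := hL0 n
          have hLCn := hLC n
          have hpos : 0 < r n ^ 2 * L n := mul_pos (pow_pos hrn 2) hLn
          rw [← ENNReal.ofReal_mul (one_div_nonneg.mpr hpos.le)]
          apply ENNReal.ofReal_le_ofReal
          have h1 : 1/(r n ^ 2 * L n) * (3/4 * Real.pi * r n ^ 2) = (3*Real.pi/4) / L n := by
            field_simp
          rw [h1]
          have hnC : 0 < ((n:ℝ)+1) * C := by positivity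
          exact div_le_div_of_nonneg_left (by positivity) hLn hLCn
      _ ≤ ENNReal.ofReal (1/(r n ^ 2 * L n)) * volume (A n) :=
          mul_le_mul_right hvol _
      _ = ∫⁻ _ in A n, ENNReal.ofReal (1/(r n ^ 2 * L n)) ∂volume := by
          rw [setLIntegral_const]
      _ ≤ ∫⁻ z in A n, f z := setLIntegral_mono hfm hpt
  -- sum the bounds
  have hsum : (⊤ : ℝ≥0∞) ≤ ∑' n, ∫⁻ z in A n, f z := by
    refine le_trans ?_ (ENNReal.tsum_le_tsum key)
    have heq : ∀ n : ℕ, ENNReal.ofReal ((3*Real.pi/4) / ((n+1) * C))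
        = ENNReal.ofReal (3*Real.pi/(4*C)) * ENNReal.ofReal ((1:ℝ)/(n+1)) := by
      intro n
      rw [← ENNReal.ofReal_mul (by positivity)]
      congr 1
      have : ((n:ℝ)+1) ≠ 0 := by positivity
      field_simp
    rw [funext heq, ENNReal.tsum_mul_left, harmonic_ennreal_top,
      ENNReal.mul_top (ENNReal.ofReal_pos.mpr (by positivity)).ne']
  rw [eq_top_iff]
  calc (⊤:ℝ≥0∞) ≤ ∑' n, ∫⁻ z in A n, f z := hsum
    _ = ∫⁻ z in ⋃ n, A n, f z := (lintegral_iUnion hAm hAd f).symm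
    _ ≤ ∫⁻ z in Metric.closedBall (0:ℂ) δ, f z := lintegral_mono_set hAsub

lemma meas_integrand : Measurable (fun z : ℂ × ℂ × ℂ =>
    ENNReal.ofReal
        (4 * (1 / 2 - ‖z.2.1‖ ^ 2) /
          (‖z.1‖ ^ 2 * (-Real.log (‖z.1‖))))) := by
  apply ENNReal.measurable_ofReal.comp
  apply Measurable.div
  · exact (measurable_const.sub
      ((continuous_norm.measurable.comp
        (measurable_fst.comp measurable_snd)).pow_const 2)).const_mul 4
  · exact ((continuous_norm.measurable.comp measurable_fst).pow_const 2).mul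
      ((Real.measurable_log.comp
        (continuous_norm.measurable.comp measurable_fst)).neg)

/-- For every `0 < ε < 1/8`, the integral over the closed ball
`K = {z ∈ ℂ³ : |z| ≤ ε}` of `z ↦ 4(1/2 − |z₂|²)/(|z₁|²(−log|z₁|))` with respect to
Lebesgue measure on `ℂ³ ≅ ℝ⁶` is infinite.  (Consequently the density of
`(dd^c u)² ∧ (i/2)dz₃∧dz̄₃` for `u = √(−log|z₁|)(|z₂|²−1)` is not locally integrable
near `{z₁ = 0}`, so this wedge product is not a Radon measure on `B(0,1/4)`.) -/
theorem integral_of_hessian_density_infinite (ε : ℝ) (hε0 : 0 < ε) (hε : ε < 1 / 8) :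
    ∫⁻ z in {z : ℂ × ℂ × ℂ |
        ‖z.1‖ ^ 2 + ‖z.2.1‖ ^ 2 + ‖z.2.2‖ ^ 2 ≤ ε ^ 2},
      ENNReal.ofReal
        (4 * (1 / 2 - ‖z.2.1‖ ^ 2) /
          (‖z.1‖ ^ 2 * (-Real.log (‖z.1‖)))) = ⊤ := by
  set δ := ε/2 with hδdef
  have hδ0 : 0 < δ := by positivity
  have hδ8 : δ ≤ 1/8 := by rw [hδdef]; linarith
  set B : Set ℂ := Metric.closedBall 0 δ with hB
  set S : Set (ℂ × ℂ × ℂ) := B ×ˢ (B ×ˢ B) with hS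
  have habs : ∀ w : ℂ, w ∈ B → ‖w‖ ≤ δ := by
    intro w hw
    simpa [hB, Complex.dist_eq] using hw
  have hSK : S ⊆ {z : ℂ × ℂ × ℂ |
      ‖z.1‖ ^ 2 + ‖z.2.1‖ ^ 2 + ‖z.2.2‖ ^ 2 ≤ ε ^ 2} := by
    rintro ⟨z1, z2, z3⟩ ⟨h1, h2, h3⟩
    simp only [Set.mem_setOf_eq]
    have a1 := habs z1 h1
    have a2 := habs z2 h2
    have a3 := habs z3 h3
    have b1 : ‖z1‖ ^ 2 ≤ δ^2 := pow_le_pow_left₀ (norm_nonneg z1) a1 2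
    have b2 : ‖z2‖ ^ 2 ≤ δ^2 := pow_le_pow_left₀ (norm_nonneg z2) a2 2
    have b3 : ‖z3‖ ^ 2 ≤ δ^2 := pow_le_pow_left₀ (norm_nonneg z3) a3 2
    have : δ^2 = ε^2/4 := by rw [hδdef]; ring
    nlinarith
  set g1 : ℂ → ℝ≥0∞ := fun x =>
    ENNReal.ofReal (1 / (‖x‖ ^ 2 * (-Real.log (‖x‖)))) with hg1
  have hlb : ∀ z ∈ S, g1 z.1 ≤ ENNReal.ofReal
      (4 * (1 / 2 - ‖z.2.1‖ ^ 2) /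
        (‖z.1‖ ^ 2 * (-Real.log (‖z.1‖)))) := by
    rintro ⟨z1, z2, z3⟩ ⟨h1, h2, h3⟩
    have a1 := habs z1 h1
    have a2 := habs z2 h2
    set D : ℝ := ‖z1‖ ^ 2 * (-Real.log (‖z1‖)) with hD
    have hDnn : 0 ≤ D := by
      apply mul_nonneg (by positivity)
      have := Real.log_nonpos (norm_nonneg z1) (by linarith)
      linarith
    have hnum : 1 ≤ 4 * (1 / 2 - ‖z2‖ ^ 2) := by
      have b2 : ‖z2‖ ^ 2 ≤ δ^2 := pow_le_pow_left₀ (norm_nonneg z2) a2 2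
      nlinarith
    rcases eq_or_lt_of_le hDnn with hDz | hDp
    · rw [hD] at hDz
      simp only [hg1, hD, ← hDz]
      norm_num
    · exact ENNReal.ofReal_le_ofReal ((div_le_div_iff_of_pos_right hDp).mpr (by linarith))
  have hprod : ∫⁻ z in S, g1 z.1 ∂volume = ⊤ := by
    have hvol3 : (volume : Measure (ℂ × ℂ × ℂ)).restrict S
        = ((volume : Measure ℂ).restrict B).prod
            (((volume : Measure ℂ).restrict B).prod ((volume : Measure ℂ).restrict B)) := by
      rw [Measure.prod_restrict, ← Measure.volume_eq_prod, Measure.prod_restrict,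
        ← Measure.volume_eq_prod]
    rw [hvol3, lintegral_prod (fun z => g1 z.1) ((meas_g.comp measurable_fst).aemeasurable)]
    simp only [lintegral_const]
    rw [lintegral_mul_const _ meas_g, core_div δ hδ0 hδ8]
    apply ENNReal.top_mul
    rw [← Set.univ_prod_univ, Measure.prod_prod]
    simp only [Measure.restrict_apply_univ]
    have hBpos : 0 < volume B := Metric.measure_closedBall_pos volume 0 hδ0
    exact mul_ne_zero hBpos.ne' hBpos.ne'
  rw [eq_top_iff]
  calc (⊤ : ℝ≥0∞) = ∫⁻ z in S, g1 z.1 ∂volume := hprod.symm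
    _ ≤ ∫⁻ z in S, ENNReal.ofReal
        (4 * (1 / 2 - ‖z.2.1‖ ^ 2) /
          (‖z.1‖ ^ 2 * (-Real.log (‖z.1‖)))) ∂volume :=
        setLIntegral_mono meas_integrand hlb
    _ ≤ _ := lintegral_mono_set hSK
end
end
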